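/- For the worst-case example graph with even k, after removing the k perfect matchings M_1,...,M_k (as defined via shifts modulo k+1), the residual graph has edge set {{a_j, b_{2j}} : j ∈ {1,...,k}} ∪ {{a_{k+1}, w}, {u, w}, {u, b_{k+1}}}, the edges {a_j, b_{2j}} are pairwise vertex-disjoint, and every maximum independent set of the residual graph has exactly k+2 vertices. -/

import Mathlib

open scoped Classical

/-- A matching of `G`, given as a finite set of edges of `G` that are pairwise vertex-disjoint. -/
def IsMatchingE {V : Type*} (G : SimpleGraph V) (M : Finset (Sym2 V)) : Prop :=
  ↑M ⊆ G.edgeSet ∧ (M : Set (Sym2 V)).Pairwise fun e f => ∀ v, v ∈ e → v ∉ f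

/-- A maximum-cardinality matching of `G`. -/
def IsMaxMatchingE {V : Type*} (G : SimpleGraph V) (M : Finset (Sym2 V)) : Prop :=
  IsMatchingE G M ∧ ∀ M', IsMatchingE G M' → M'.card ≤ M.card

/-- An independent set of `G`. -/
def IsIndepF {V : Type*} (G : SimpleGraph V) (S : Finset V) : Prop :=
  ∀ v ∈ S, ∀ w ∈ S, ¬G.Adj v w

/-- A maximum-cardinality independent set of `G`. -/
def IsMaxIndepF {V : Type*} (G : SimpleGraph V) (S : Finset V) : Prop :=
  IsIndepF G S ∧ ∀ S', IsIndepF G S' → S'.card ≤ S.card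

/-- A `k`-dependent set: every vertex of the induced subgraph `G[S]` has degree at most `k`. -/
def KDepSet {V : Type*} (G : SimpleGraph V) (k : ℕ) (S : Finset V) : Prop :=
  ∀ v ∈ S, (S.filter fun w => G.Adj v w).card ≤ k

/-- The residual graph after deleting the matchings `M 0, ..., M (i-1)` from `G`. -/
def resid {V : Type*} (G : SimpleGraph V) (M : ℕ → Finset (Sym2 V)) (i : ℕ) : SimpleGraph V :=
  G.deleteEdges (⋃ j ∈ Set.Iio i, (M j : Set (Sym2 V)))

/-- The vertex set of the worst-case example graph: `A ∪ {u}` on the left, `B ∪ {w}` on the right. -/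
abbrev ExV (k : ℕ) := (Fin (k+1) ⊕ Unit) ⊕ (Fin (k+1) ⊕ Unit)

/-- The base relation of the worst-case example graph: `u ~ w`, `aᵢ ~ bⱼ` for `i ≠ j`,
`aᵢ ~ w` and `u ~ bⱼ` for all `i, j`. -/
def exRel (k : ℕ) : ExV k → ExV k → Prop
  | Sum.inl x, Sum.inr y =>
    match x, y with
    | Sum.inl i, Sum.inl j => i ≠ j
    | _, _ => True
  | _, _ => False

/-- The worst-case example bipartite graph. -/
def exGraph (k : ℕ) : SimpleGraph (ExV k) := SimpleGraph.fromRel (exRel k)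

/-- The vertex `aᵢ` (index taken modulo `k+1`). -/
def aV (k : ℕ) (i : ℕ) : ExV k := Sum.inl (Sum.inl (Fin.ofNat (k+1) i))
/-- The vertex `bᵢ` (index taken modulo `k+1`). -/
def bV (k : ℕ) (i : ℕ) : ExV k := Sum.inr (Sum.inl (Fin.ofNat (k+1) i))
/-- The vertex `u`. -/
def uV (k : ℕ) : ExV k := Sum.inl (Sum.inr ())
/-- The vertex `w`. -/
def wV (k : ℕ) : ExV k := Sum.inr (Sum.inr ())

/-- The vertex set `A ∪ B`. -/
def ABset (k : ℕ) : Finset (ExV k) :=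
  (Finset.univ.image fun i : Fin (k+1) => (Sum.inl (Sum.inl i) : ExV k)) ∪
  (Finset.univ.image fun i : Fin (k+1) => (Sum.inr (Sum.inl i) : ExV k))

/-- The matching `M_j = ({{aᵢ, b_{i+j}} : i ∈ {1,...,k+1}} \ {{a_j, b_{2j}}}) ∪ {{a_j,w},{b_{2j},u}}`,
indices of `b` taken modulo `k+1`. -/
def Mj (k j : ℕ) : Finset (Sym2 (ExV k)) :=
  (((Finset.range (k+1)).image fun i => s(aV k (i+1), bV k (i+1+j))) \ {s(aV k j, bV k (2*j))})
    ∪ {s(aV k j, wV k), s(bV k (2*j), uV k)}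

/-- The residual graph obtained from the example graph after removing `M_1, ..., M_k`. -/
def residEx (k : ℕ) : SimpleGraph (ExV k) :=
  (exGraph k).deleteEdges (⋃ j ∈ Set.Icc 1 k, (Mj k j : Set (Sym2 (ExV k))))

open Fin.NatCast Fin.CommRing

lemma two_c (k : ℕ) (hke : Even k) : (2 : Fin (k+1)) * ((k/2 + 1 : ℕ) : Fin (k+1)) = 1 := by
  have h2 : (2 : Fin (k+1)) = ((2:ℕ) : Fin (k+1)) := by push_cast; ring
  rw [h2, ← Nat.cast_mul]
  obtain ⟨m, hm⟩ := hke
  have : 2 * (k/2+1) = (k+1) + 1 := by omega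
  rw [this]; push_cast; simp

lemma two_cancel (k : ℕ) (hke : Even k) (x y : Fin (k+1)) (h : 2*x = 2*y) : x = y := by
  have hc := two_c k hke
  calc x = (2 * ((k/2 + 1 : ℕ) : Fin (k+1))) * x := by rw [hc]; ring
    _ = ((k/2 + 1 : ℕ) : Fin (k+1)) * (2*x) := by ring
    _ = ((k/2 + 1 : ℕ) : Fin (k+1)) * (2*y) := by rw [h]
    _ = y := by rw [← mul_assoc, mul_comm (((k/2 + 1 : ℕ)) : Fin (k+1)) 2, hc, one_mul]

def Av (k : ℕ) (p : Fin (k+1)) : ExV k := Sum.inl (Sum.inl p)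
def Bv (k : ℕ) (p : Fin (k+1)) : ExV k := Sum.inr (Sum.inl p)

lemma aV_eq (k i : ℕ) : aV k i = Av k (i : Fin (k+1)) := rfl
lemma bV_eq (k i : ℕ) : bV k i = Bv k (i : Fin (k+1)) := rfl

lemma memMj_ab (k j : ℕ) (p q : Fin (k+1)) :
    s(Av k p, Bv k q) ∈ Mj k j ↔
      q = p + (j : Fin (k+1)) ∧ ¬(p = (j : Fin (k+1)) ∧ q = 2 * (j : Fin (k+1))) := by
  have h2 : ((2 * j : ℕ) : Fin (k+1)) = 2 * (j : Fin (k+1)) := by push_cast; ring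
  simp only [Mj, Finset.mem_union, Finset.mem_sdiff, Finset.mem_image, Finset.mem_range,
    Finset.mem_insert, Finset.mem_singleton, aV_eq, bV_eq, Av, Bv, uV, wV, Sym2.eq_iff]
  simp only [Sum.inl.injEq, Sum.inr.injEq, and_false, false_and, or_false, false_or,
    reduceCtorEq, h2]
  constructor
  · rintro ⟨⟨i, hi, hp, hq⟩, hne⟩
    subst hp; subst hq
    exact ⟨by push_cast; ring, hne⟩
  · rintro ⟨hq, hne⟩
    refine ⟨⟨(p - 1).val, (p-1).isLt, ?_, ?_⟩, hne⟩
    · push_cast [Fin.cast_val_eq_self]; ring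
    · push_cast [Fin.cast_val_eq_self]; rw [hq]; ring

lemma memMj_aw (k j : ℕ) (p : Fin (k+1)) :
    s(Av k p, wV k) ∈ Mj k j ↔ p = (j : Fin (k+1)) := by
  simp only [Mj, Finset.mem_union, Finset.mem_sdiff, Finset.mem_image, Finset.mem_range,
    Finset.mem_insert, Finset.mem_singleton, aV_eq, bV_eq, Av, Bv, uV, wV, Sym2.eq_iff]
  simp [Sum.inl.injEq]

lemma memMj_ub (k j : ℕ) (q : Fin (k+1)) :
    s(uV k, Bv k q) ∈ Mj k j ↔ q = 2 * (j : Fin (k+1)) := by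
  have h2 : ((2 * j : ℕ) : Fin (k+1)) = 2 * (j : Fin (k+1)) := by push_cast; ring
  simp only [Mj, Finset.mem_union, Finset.mem_sdiff, Finset.mem_image, Finset.mem_range,
    Finset.mem_insert, Finset.mem_singleton, aV_eq, bV_eq, Av, Bv, uV, wV, Sym2.eq_iff]
  simp [Sum.inl.injEq, h2]

lemma memMj_uw (k j : ℕ) : ¬ (s(uV k, wV k) ∈ Mj k j) := by
  simp only [Mj, Finset.mem_union, Finset.mem_sdiff, Finset.mem_image, Finset.mem_range,
    Finset.mem_insert, Finset.mem_singleton, aV_eq, bV_eq, Av, Bv, uV, wV, Sym2.eq_iff]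
  simp

def Uk (k : ℕ) : Set (Sym2 (ExV k)) := ⋃ j ∈ Set.Icc 1 k, (Mj k j : Set (Sym2 (ExV k)))

lemma residEx_eq (k : ℕ) : residEx k = (exGraph k).deleteEdges (Uk k) := rfl

lemma cast_ne_zero_of_Icc (k j : ℕ) (hj : j ∈ Set.Icc 1 k) : (j : Fin (k+1)) ≠ 0 := by
  obtain ⟨hj1, hj2⟩ := hj
  intro h
  have := Fin.val_cast_of_lt (show j < k+1 by omega)
  rw [h] at this
  simp at this
  omega

lemma val_mem_Icc (k : ℕ) (x : Fin (k+1)) (hx : x ≠ 0) : x.val ∈ Set.Icc 1 k := by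
  have h1 : x.val < k + 1 := x.isLt
  have h2 : x.val ≠ 0 := fun h => hx (Fin.ext (by rw [h]; simp))
  exact ⟨by omega, by omega⟩

lemma memU_ab (k : ℕ) (p q : Fin (k+1)) :
    s(Av k p, Bv k q) ∈ Uk k ↔ p ≠ q ∧ q ≠ 2 * p := by
  simp only [Uk, Set.mem_iUnion, Finset.mem_coe, memMj_ab, exists_prop]
  constructor
  · rintro ⟨j, hj, hq, hne⟩
    have hjne := cast_ne_zero_of_Icc k j hj
    constructor
    · rintro rfl
      exact hjne (left_eq_add.mp hq).symm.symm
    · intro h2p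
      have hjp : (j : Fin (k+1)) = p := by
        have : p + (j : Fin (k+1)) = p + p := by rw [← hq, h2p]; ring
        exact add_left_cancel this
      exact hne ⟨hjp.symm, by rw [h2p, hjp]⟩
  · rintro ⟨hpq, h2p⟩
    have hd : q - p ≠ 0 := fun h => hpq (sub_eq_zero.mp h).symm
    refine ⟨(q - p).val, val_mem_Icc k _ hd, ?_, ?_⟩
    · rw [Fin.cast_val_eq_self]; ring
    · rintro ⟨h1, h2⟩
      rw [Fin.cast_val_eq_self] at h1
      have := sub_eq_iff_eq_add.mp h1.symm
      exact h2p (by rw [this]; ring)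

lemma memU_aw (k : ℕ) (p : Fin (k+1)) :
    s(Av k p, wV k) ∈ Uk k ↔ p ≠ 0 := by
  simp only [Uk, Set.mem_iUnion, Finset.mem_coe, memMj_aw, exists_prop]
  constructor
  · rintro ⟨j, hj, rfl⟩
    exact cast_ne_zero_of_Icc k j hj
  · intro hp
    exact ⟨p.val, val_mem_Icc k p hp, (Fin.cast_val_eq_self p).symm⟩

lemma memU_ub (k : ℕ) (hke : Even k) (q : Fin (k+1)) :
    s(uV k, Bv k q) ∈ Uk k ↔ q ≠ 0 := by
  simp only [Uk, Set.mem_iUnion, Finset.mem_coe, memMj_ub, exists_prop]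
  constructor
  · rintro ⟨j, hj, rfl⟩
    intro h
    apply cast_ne_zero_of_Icc k j hj
    exact two_cancel k hke _ _ (by rw [h]; ring)
  · intro hq
    set c : Fin (k+1) := ((k/2 + 1 : ℕ) : Fin (k+1)) with hc
    have h2c : 2 * c = 1 := two_c k hke
    have hcq : c * q ≠ 0 := by
      intro h
      apply hq
      calc q = (2 * c) * q := by rw [h2c, one_mul]
        _ = 2 * (c * q) := by ring
        _ = 0 := by rw [h]; ring
    refine ⟨(c * q).val, val_mem_Icc k _ hcq, ?_⟩
    rw [Fin.cast_val_eq_self]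
    calc q = (2 * c) * q := by rw [h2c, one_mul]
      _ = 2 * (c * q) := by ring

lemma memU_uw (k : ℕ) : ¬ (s(uV k, wV k) ∈ Uk k) := by
  simp only [Uk, Set.mem_iUnion, Finset.mem_coe, exists_prop]
  rintro ⟨j, hj, h⟩
  exact memMj_uw k j h

def Rset (k : ℕ) : Finset (Sym2 (ExV k)) :=
  ((Finset.Icc 1 k).image fun j => s(aV k j, bV k (2*j))) ∪
    ({s(aV k (k+1), wV k), s(uV k, wV k), s(uV k, bV k (k+1))} : Finset (Sym2 (ExV k)))

lemma castk1 (k : ℕ) : ((k+1 : ℕ) : Fin (k+1)) = 0 := by simp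

lemma memR_ab (k : ℕ) (p q : Fin (k+1)) :
    s(Av k p, Bv k q) ∈ Rset k ↔ p ≠ 0 ∧ q = 2 * p := by
  simp only [Rset, Finset.mem_union, Finset.mem_image, Finset.mem_Icc, Finset.mem_insert,
    Finset.mem_singleton, aV_eq, bV_eq, Av, Bv, uV, wV, Sym2.eq_iff, castk1]
  simp only [Sum.inl.injEq, Sum.inr.injEq, and_false, false_and, or_false, false_or,
    reduceCtorEq, or_self]
  constructor
  · rintro ⟨j, ⟨hj1, hj2⟩, hp, hq⟩
    have hjne := cast_ne_zero_of_Icc k j ⟨hj1, hj2⟩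
    refine ⟨by rw [← hp]; exact hjne, ?_⟩
    rw [← hp, ← hq]; push_cast; ring
  · rintro ⟨hp, hq⟩
    obtain ⟨h1, h2⟩ := val_mem_Icc k p hp
    exact ⟨p.val, ⟨h1, h2⟩, Fin.cast_val_eq_self p, by
      rw [hq]; push_cast [Fin.cast_val_eq_self]; ring⟩

lemma memR_aw (k : ℕ) (p : Fin (k+1)) :
    s(Av k p, wV k) ∈ Rset k ↔ p = 0 := by
  simp only [Rset, Finset.mem_union, Finset.mem_image, Finset.mem_Icc, Finset.mem_insert,
    Finset.mem_singleton, aV_eq, bV_eq, Av, Bv, uV, wV, Sym2.eq_iff, castk1]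
  simp [Sum.inl.injEq]

lemma memR_uw (k : ℕ) : s(uV k, wV k) ∈ Rset k := by
  simp [Rset]

lemma memR_ub (k : ℕ) (q : Fin (k+1)) :
    s(uV k, Bv k q) ∈ Rset k ↔ q = 0 := by
  simp only [Rset, Finset.mem_union, Finset.mem_image, Finset.mem_Icc, Finset.mem_insert,
    Finset.mem_singleton, aV_eq, bV_eq, Av, Bv, uV, wV, Sym2.eq_iff, castk1]
  simp [Sum.inl.injEq, eq_comm]

lemma memR_left (k : ℕ) (x y : Fin (k+1) ⊕ Unit) :
    s((Sum.inl x : ExV k), Sum.inl y) ∉ Rset k := by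
  simp [Rset, aV, bV, uV, wV, Sym2.eq_iff]

lemma memR_right (k : ℕ) (x y : Fin (k+1) ⊕ Unit) :
    s((Sum.inr x : ExV k), Sum.inr y) ∉ Rset k := by
  simp [Rset, aV, bV, uV, wV, Sym2.eq_iff]

lemma adj_left (k : ℕ) (x y : Fin (k+1) ⊕ Unit) :
    ¬ (exGraph k).Adj (Sum.inl x) (Sum.inl y) := by
  simp [exGraph, SimpleGraph.fromRel_adj, exRel]

lemma adj_right (k : ℕ) (x y : Fin (k+1) ⊕ Unit) :
    ¬ (exGraph k).Adj (Sum.inr x) (Sum.inr y) := by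
  simp [exGraph, SimpleGraph.fromRel_adj, exRel]

lemma adj_ab (k : ℕ) (p q : Fin (k+1)) :
    (exGraph k).Adj (Av k p) (Bv k q) ↔ p ≠ q := by
  simp [exGraph, SimpleGraph.fromRel_adj, exRel, Av, Bv]

lemma adj_aw (k : ℕ) (p : Fin (k+1)) : (exGraph k).Adj (Av k p) (wV k) := by
  simp [exGraph, SimpleGraph.fromRel_adj, exRel, Av, wV]

lemma adj_ub (k : ℕ) (q : Fin (k+1)) : (exGraph k).Adj (uV k) (Bv k q) := by
  simp [exGraph, SimpleGraph.fromRel_adj, exRel, Bv, uV]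

lemma adj_uw (k : ℕ) : (exGraph k).Adj (uV k) (wV k) := by
  simp [exGraph, SimpleGraph.fromRel_adj, exRel, uV, wV]

lemma p_ne_two_mul_self (k : ℕ) (p : Fin (k+1)) (h : p ≠ 0) : p ≠ 2 * p := by
  intro hh
  apply h
  have : p + 0 = p + p := by rw [add_zero]; nth_rewrite 1 [hh]; ring
  exact (add_left_cancel this).symm

lemma key_ab (k : ℕ) (p q : Fin (k+1)) :
    ((exGraph k).Adj (Av k p) (Bv k q) ∧ s(Av k p, Bv k q) ∉ Uk k) ↔
      s(Av k p, Bv k q) ∈ Rset k := by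
  rw [adj_ab, memU_ab, memR_ab]
  constructor
  · rintro ⟨hpq, hU⟩
    by_cases h2 : q = 2 * p
    · refine ⟨?_, h2⟩
      rintro rfl
      rw [h2] at hpq
      exact hpq (by ring)
    · exact absurd ⟨hpq, h2⟩ hU
  · rintro ⟨hp, h2⟩
    subst h2
    exact ⟨p_ne_two_mul_self k p hp, fun hc => hc.2 rfl⟩

lemma key_aw (k : ℕ) (p : Fin (k+1)) :
    ((exGraph k).Adj (Av k p) (wV k) ∧ s(Av k p, wV k) ∉ Uk k) ↔
      s(Av k p, wV k) ∈ Rset k := by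
  rw [memU_aw, memR_aw]
  simp [adj_aw]

lemma key_ub (k : ℕ) (hke : Even k) (q : Fin (k+1)) :
    ((exGraph k).Adj (uV k) (Bv k q) ∧ s(uV k, Bv k q) ∉ Uk k) ↔
      s(uV k, Bv k q) ∈ Rset k := by
  rw [memU_ub k hke, memR_ub]
  simp [adj_ub]

lemma key_uw (k : ℕ) :
    ((exGraph k).Adj (uV k) (wV k) ∧ s(uV k, wV k) ∉ Uk k) ↔
      s(uV k, wV k) ∈ Rset k := by
  exact iff_of_true ⟨adj_uw k, memU_uw k⟩ (memR_uw k)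

lemma part1 (k : ℕ) (hke : Even k) : (residEx k).edgeSet = ↑(Rset k) := by
  ext e
  induction e using Sym2.ind with
  | _ x y =>
    rw [residEx_eq, SimpleGraph.edgeSet_deleteEdges, Set.mem_diff, SimpleGraph.mem_edgeSet,
      Finset.mem_coe]
    obtain ((p | ⟨⟩) | (q | ⟨⟩)) := x <;> obtain ((p' | ⟨⟩) | (q' | ⟨⟩)) := y
    · exact iff_of_false (fun h => adj_left k _ _ h.1) (memR_left k _ _)
    · exact iff_of_false (fun h => adj_left k _ _ h.1) (memR_left k _ _)
    · exact key_ab k p q'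
    · exact key_aw k p
    · exact iff_of_false (fun h => adj_left k _ _ h.1) (memR_left k _ _)
    · exact iff_of_false (fun h => adj_left k _ _ h.1) (memR_left k _ _)
    · exact key_ub k hke q'
    · exact key_uw k
    · rw [Sym2.eq_swap, SimpleGraph.adj_comm]; exact key_ab k p' q
    · rw [Sym2.eq_swap, SimpleGraph.adj_comm]; exact key_ub k hke q
    · exact iff_of_false (fun h => adj_right k _ _ h.1) (memR_right k _ _)
    · exact iff_of_false (fun h => adj_right k _ _ h.1) (memR_right k _ _)
    · rw [Sym2.eq_swap, SimpleGraph.adj_comm]; exact key_aw k p'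
    · rw [Sym2.eq_swap, SimpleGraph.adj_comm]; exact key_uw k
    · exact iff_of_false (fun h => adj_right k _ _ h.1) (memR_right k _ _)
    · exact iff_of_false (fun h => adj_right k _ _ h.1) (memR_right k _ _)

lemma cast_inj_Icc (k j j' : ℕ) (hj : j ∈ Finset.Icc 1 k) (hj' : j' ∈ Finset.Icc 1 k)
    (h : (j : Fin (k+1)) = (j' : Fin (k+1))) : j = j' := by
  rw [Finset.mem_Icc] at hj hj'
  have h1 := Fin.val_cast_of_lt (show j < k+1 by omega)
  have h2 := Fin.val_cast_of_lt (show j' < k+1 by omega)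
  rw [← h1, ← h2, h]

lemma part2 (k : ℕ) (hke : Even k) :
    ∀ j ∈ Finset.Icc 1 k, ∀ j' ∈ Finset.Icc 1 k, j ≠ j' →
      ∀ v : ExV k, v ∈ s(aV k j, bV k (2*j)) → v ∉ s(aV k j', bV k (2*j')) := by
  intro j hj j' hj' hne v hv hv'
  rw [Sym2.mem_iff] at hv hv'
  have h2 : ∀ i : ℕ, ((2 * i : ℕ) : Fin (k+1)) = 2 * (i : Fin (k+1)) := by
    intro i; push_cast; ring
  rcases hv with rfl | rfl <;> rcases hv' with h | h <;>
    simp only [aV, bV, Sum.inl.injEq, Sum.inr.injEq, reduceCtorEq] at h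
  · exact hne (cast_inj_Icc k j j' hj hj' h)
  · apply hne
    apply cast_inj_Icc k j j' hj hj'
    change ((2*j : ℕ) : Fin (k+1)) = ((2*j' : ℕ) : Fin (k+1)) at h
    rw [h2, h2] at h
    exact two_cancel k hke _ _ h

lemma radj (k : ℕ) (hke : Even k) (x y : ExV k) (h : s(x,y) ∈ Rset k) :
    (residEx k).Adj x y := by
  rw [← SimpleGraph.mem_edgeSet, part1 k hke]
  exact h

def gmap (k : ℕ) : ExV k → (Fin (k+1) ⊕ Bool)
  | Sum.inl (Sum.inl i) => if i = 0 then Sum.inr true else Sum.inl i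
  | Sum.inl (Sum.inr _) => Sum.inr false
  | Sum.inr (Sum.inl m) =>
      if m = 0 then Sum.inr false else Sum.inl (((k/2 + 1 : ℕ) : Fin (k+1)) * m)
  | Sum.inr (Sum.inr _) => Sum.inr true

lemma two_mul_cm (k : ℕ) (hke : Even k) (m : Fin (k+1)) :
    2 * (((k/2 + 1 : ℕ) : Fin (k+1)) * m) = m := by
  rw [← mul_assoc, two_c k hke, one_mul]

lemma two_mul_cm2 (k : ℕ) (hke : Even k) (m : Fin (k+1)) :
    2 * ((((k/2 : ℕ) : Fin (k+1)) + 1) * m) = m := by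
  have : (((k/2 : ℕ) : Fin (k+1)) + 1) = ((k/2 + 1 : ℕ) : Fin (k+1)) := by push_cast; ring
  rw [this, two_mul_cm k hke]

lemma cm_ne2 (k : ℕ) (hke : Even k) (m : Fin (k+1)) (hm : m ≠ 0) :
    (((k/2 : ℕ) : Fin (k+1)) + 1) * m ≠ 0 := by
  intro h
  apply hm
  rw [← two_mul_cm2 k hke m, h, mul_zero]

lemma cm_ne (k : ℕ) (hke : Even k) (m : Fin (k+1)) (hm : m ≠ 0) :
    ((k/2 + 1 : ℕ) : Fin (k+1)) * m ≠ 0 := by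
  intro h
  apply hm
  rw [← two_mul_cm k hke m, h, mul_zero]

lemma g_spec (k : ℕ) (hke : Even k) (x y : ExV k) (hg : gmap k x = gmap k y)
    (hxy : x ≠ y) : (residEx k).Adj x y := by
  obtain ((i | ⟨⟩) | (m | ⟨⟩)) := x <;> obtain ((i' | ⟨⟩) | (m' | ⟨⟩)) := y
  · -- a a
    by_cases hi : i = 0 <;> by_cases hi' : i' = 0 <;> simp [gmap, hi, hi'] at hg <;>
      first
      | (exact absurd (by rw [hi, hi']) hxy)
      | (exact absurd (by rw [hg]) hxy)
  · by_cases hi : i = 0 <;> simp [gmap, hi] at hg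
  · -- a b
    by_cases hi : i = 0 <;> by_cases hm' : m' = 0 <;> simp [gmap, hi, hm'] at hg
    have hm2 : m' = 2 * i := by rw [hg, two_mul_cm2 k hke]
    rw [hm2]
    exact radj k hke _ _ ((memR_ab k i (2*i)).mpr ⟨hi, rfl⟩)
  · -- a w
    by_cases hi : i = 0 <;> simp [gmap, hi] at hg
    rw [hi]
    exact radj k hke _ _ ((memR_aw k 0).mpr rfl)
  · by_cases hi' : i' = 0 <;> simp [gmap, hi'] at hg
  · exact absurd rfl hxy
  · -- u b
    by_cases hm' : m' = 0 <;> simp [gmap, hm'] at hg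
    rw [hm']
    exact radj k hke _ _ ((memR_ub k 0).mpr rfl)
  · simp [gmap] at hg
  · -- b a
    by_cases hm : m = 0 <;> by_cases hi' : i' = 0 <;> simp [gmap, hm, hi'] at hg
    have hm2 : m = 2 * i' := by rw [← hg, two_mul_cm2 k hke]
    rw [hm2]
    exact (radj k hke _ _ ((memR_ab k i' (2*i')).mpr ⟨hi', rfl⟩)).symm
  · -- b u
    by_cases hm : m = 0 <;> simp [gmap, hm] at hg
    rw [hm]
    exact (radj k hke _ _ ((memR_ub k 0).mpr rfl)).symm
  · -- b b
    by_cases hm : m = 0 <;> by_cases hm' : m' = 0 <;> simp [gmap, hm, hm'] at hg <;>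
      first
      | (exact absurd (by rw [hm, hm']) hxy)
      | (exact absurd (by
          have : m = m' := by rw [← two_mul_cm2 k hke m, hg, two_mul_cm2 k hke]
          rw [this]) hxy)
  · by_cases hm : m = 0 <;> simp [gmap, hm] at hg
  · -- w a
    by_cases hi' : i' = 0 <;> simp [gmap, hi'] at hg
    rw [hi']
    exact (radj k hke _ _ ((memR_aw k 0).mpr rfl)).symm
  · simp [gmap] at hg
  · by_cases hm' : m' = 0 <;> simp [gmap, hm'] at hg
  · exact absurd rfl hxy

lemma gmap_ne (k : ℕ) (hke : Even k) (x : ExV k) : gmap k x ≠ Sum.inl 0 := by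
  obtain ((i | ⟨⟩) | (m | ⟨⟩)) := x
  · by_cases hi : i = 0 <;> simp [gmap, hi]
  · simp [gmap]
  · by_cases hm : m = 0 <;> simp [gmap, hm]
    exact cm_ne2 k hke m hm
  · simp [gmap]

lemma upper (k : ℕ) (hke : Even k) (I : Finset (ExV k)) (hI : IsIndepF (residEx k) I) :
    I.card ≤ k + 2 := by
  have hinj : Set.InjOn (gmap k) I := by
    intro x hx y hy hg
    by_contra hxy
    exact hI x hx y hy (g_spec k hke x y hg hxy)
  have h1 : I.card = (I.image (gmap k)).card := (Finset.card_image_of_injOn hinj).symm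
  have h2 : I.image (gmap k) ⊆ Finset.univ.erase (Sum.inl 0) := by
    intro z hz
    simp only [Finset.mem_image] at hz
    obtain ⟨x, hx, rfl⟩ := hz
    exact Finset.mem_erase.mpr ⟨gmap_ne k hke x, Finset.mem_univ _⟩
  have h3 := Finset.card_le_card h2
  rw [Finset.card_erase_of_mem (Finset.mem_univ _), Finset.card_univ] at h3
  have h4 : Fintype.card (Fin (k+1) ⊕ Bool) = k + 3 := by simp
  omega

lemma lower (k : ℕ) :
    ∃ S : Finset (ExV k), IsIndepF (residEx k) S ∧ S.card = k + 2 := by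
  refine ⟨(Finset.univ : Finset (Fin (k+1) ⊕ Unit)).image Sum.inl, ?_, ?_⟩
  · intro v hv w hw hadj
    simp only [Finset.mem_image, Finset.mem_univ, true_and] at hv hw
    obtain ⟨x, rfl⟩ := hv
    obtain ⟨y, rfl⟩ := hw
    have : (exGraph k).Adj (Sum.inl x) (Sum.inl y) := by
      have hle : residEx k ≤ exGraph k := SimpleGraph.deleteEdges_le _
      exact hle hadj
    exact adj_left k x y this
  · rw [Finset.card_image_of_injective _ Sum.inl_injective, Finset.card_univ]
    simp

lemma part3 (k : ℕ) (hke : Even k) (I : Finset (ExV k)) (hI : IsMaxIndepF (residEx k) I) :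
    I.card = k + 2 := by
  obtain ⟨S, hS, hScard⟩ := lower k
  have h1 := upper k hke I hI.1
  have h2 := hI.2 S hS
  omega

theorem stmt18 (k : ℕ) (hk : 1 ≤ k) (hke : Even k) :
    (residEx k).edgeSet =
      ↑(((Finset.Icc 1 k).image fun j => s(aV k j, bV k (2*j))) ∪
        ({s(aV k (k+1), wV k), s(uV k, wV k), s(uV k, bV k (k+1))} : Finset (Sym2 (ExV k)))) ∧
    (∀ j ∈ Finset.Icc 1 k, ∀ j' ∈ Finset.Icc 1 k, j ≠ j' →
      ∀ v : ExV k, v ∈ s(aV k j, bV k (2*j)) → v ∉ s(aV k j', bV k (2*j'))) ∧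
    (∀ I : Finset (ExV k), IsMaxIndepF (residEx k) I → I.card = k + 2) := by
  exact ⟨part1 k hke, part2 k hke, part3 k hke⟩
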